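/- Suppose H = I − A P satisfies ‖H‖ < 1 in the operator 2-norm. Let α ∈ ℝ^{m_k} minimize ‖(A q(x_k) − b) + Σ_{i=1}^{m_k} α_i ((A q(x_k) − b) − (A q(x_{k−i}) − b))‖ over all α ∈ ℝ^{m_k} (the AAg least-squares problem), define x_{k+1} = q(x_k) + Σ_{i=1}^{m_k} α_i (q(x_k) − q(x_{k−i})) and r̄_{k+1} = A x_{k+1} − b, and assume r̄_k ≠ 0. Then ‖r̄_{k+1}‖ < ‖r̄_k‖. -/

import Mathlib

open scoped RealInnerProductSpace

/-- Matrix-vector multiplication on Euclidean space. -/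
noncomputable def mulV {n : ℕ} (M : Matrix (Fin n) (Fin n) ℝ)
    (v : EuclideanSpace ℝ (Fin n)) : EuclideanSpace ℝ (Fin n) :=
  Matrix.toEuclideanLin M v

open scoped Matrix.Norms.L2Operator

lemma mulV_add {n : ℕ} (M : Matrix (Fin n) (Fin n) ℝ) (u v : EuclideanSpace ℝ (Fin n)) :
    mulV M (u + v) = mulV M u + mulV M v := by simp [mulV]

lemma mulV_sub {n : ℕ} (M : Matrix (Fin n) (Fin n) ℝ) (u v : EuclideanSpace ℝ (Fin n)) :
    mulV M (u - v) = mulV M u - mulV M v := by simp [mulV]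

lemma mulV_smul {n : ℕ} (M : Matrix (Fin n) (Fin n) ℝ) (c : ℝ) (v : EuclideanSpace ℝ (Fin n)) :
    mulV M (c • v) = c • mulV M v := by simp [mulV]

lemma mulV_matSub {n : ℕ} (M N : Matrix (Fin n) (Fin n) ℝ) (v : EuclideanSpace ℝ (Fin n)) :
    mulV (M - N) v = mulV M v - mulV N v := by simp [mulV]

lemma mulV_mul {n : ℕ} (M N : Matrix (Fin n) (Fin n) ℝ) (v : EuclideanSpace ℝ (Fin n)) :
    mulV (M * N) v = mulV M (mulV N v) := by
  simp [mulV, Matrix.toEuclideanLin_apply, Matrix.mulVec_mulVec]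

lemma mulV_one {n : ℕ} (v : EuclideanSpace ℝ (Fin n)) : mulV 1 v = v := by
  simp [mulV, Matrix.toEuclideanLin_apply]

lemma mulV_norm_le {n : ℕ} (M : Matrix (Fin n) (Fin n) ℝ) (v : EuclideanSpace ℝ (Fin n)) :
    ‖mulV M v‖ ≤ ‖M‖ * ‖v‖ := by
  simpa [mulV, Matrix.toEuclideanLin_apply] using M.l2_opNorm_mulVec v

/-- strict decrease of the AAg classical residual when ‖H‖ < 1. -/
theorem stmt_13 {n : ℕ} (A P : Matrix (Fin n) (Fin n) ℝ)
    (hA : IsUnit A.det) (hP : IsUnit P.det)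
    (b : EuclideanSpace ℝ (Fin n))
    (q rb : EuclideanSpace ℝ (Fin n) → EuclideanSpace ℝ (Fin n))
    (hq : ∀ y, q y = y + mulV P (b - mulV A y))
    (hrb : ∀ y, rb y = mulV A y - b)
    (H : Matrix (Fin n) (Fin n) ℝ) (hH : H = 1 - A * P)
    (hHnorm : ‖H‖ < 1)
    (k m : ℕ) (hm : m ≤ k)
    (x : ℕ → EuclideanSpace ℝ (Fin n))
    (α : ℕ → ℝ)
    (hopt : ∀ a : ℕ → ℝ,
      ‖(mulV A (q (x k)) - b) + ∑ i ∈ Finset.Icc 1 m,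
          α i • ((mulV A (q (x k)) - b) - (mulV A (q (x (k - i))) - b))‖ ≤
      ‖(mulV A (q (x k)) - b) + ∑ i ∈ Finset.Icc 1 m,
          a i • ((mulV A (q (x k)) - b) - (mulV A (q (x (k - i))) - b))‖)
    (xk1 rk1 : EuclideanSpace ℝ (Fin n))
    (hx : xk1 = q (x k) + ∑ i ∈ Finset.Icc 1 m, α i • (q (x k) - q (x (k - i))))
    (hrk1 : rk1 = mulV A xk1 - b)
    (hrk : rb (x k) ≠ 0) :
    ‖rk1‖ < ‖rb (x k)‖ := by
  -- Key: A q(y) - b = H (A y - b)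
  have hkey : ∀ y, mulV A (q y) - b = mulV H (mulV A y - b) := by
    intro y
    rw [hq, hH, mulV_matSub, mulV_one, mulV_mul, mulV_add]
    simp only [mulV_sub]
    abel
  -- rewrite rk1
  have hrk1' : rk1 = (mulV A (q (x k)) - b) + ∑ i ∈ Finset.Icc 1 m,
      α i • ((mulV A (q (x k)) - b) - (mulV A (q (x (k - i))) - b)) := by
    rw [hrk1, hx, mulV_add]
    rw [show mulV A (∑ i ∈ Finset.Icc 1 m, α i • (q (x k) - q (x (k - i)))) =
        ∑ i ∈ Finset.Icc 1 m, α i • (mulV A (q (x k)) - mulV A (q (x (k - i)))) by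
      simp [mulV, map_sum]]
    have hc : ∀ i, (mulV A (q (x k)) - b) - (mulV A (q (x (k - i))) - b)
        = mulV A (q (x k)) - mulV A (q (x (k - i))) := fun i => sub_sub_sub_cancel_right _ _ _
    simp only [hc]
    abel
  have h0 := hopt 0
  simp only [Pi.zero_apply, zero_smul, Finset.sum_const_zero, add_zero] at h0
  rw [← hrk1'] at h0
  calc ‖rk1‖ ≤ ‖mulV A (q (x k)) - b‖ := h0
    _ = ‖mulV H (rb (x k))‖ := by rw [hkey, hrb]
    _ ≤ ‖H‖ * ‖rb (x k)‖ := mulV_norm_le _ _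
    _ < 1 * ‖rb (x k)‖ := by
        exact mul_lt_mul_of_pos_right hHnorm (norm_pos_iff.mpr hrk)
    _ = ‖rb (x k)‖ := one_mul _
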